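/- Let γ ≥ 1 and g ≥ 8γ be natural numbers. Let H be a numerical semigroup of genus g such that every nonzero element of H is at least g − 2γ + 1 and the interval [g − 2γ + 1, g] is entirely contained in H. Then the weight w(H) = Σ_{i=1}^{g}(ℓ_i − i) (where ℓ_1 < ... < ℓ_g are the gaps) satisfies w(H) ≤ 2γg − 2γ(4γ − 1), with the maximum attained when the gap set is {1, ..., g−2γ} ∪ {2g−6γ+2, ..., 2g−4γ+1}. -/

import Mathlib

private lemma sumIcc1 (m : ℕ) : (∑ n ∈ Finset.Icc 1 m, (n : ℤ)) * 2 = (m : ℤ) * (m + 1) := by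
  induction m with
  | zero => simp
  | succ k ih =>
    rw [Finset.sum_Icc_succ_top (by omega)]
    push_cast
    linarith

private lemma sumIcc (a b : ℕ) (ha : 1 ≤ a) (hab : a ≤ b + 1) :
    (∑ n ∈ Finset.Icc a b, (n : ℤ)) * 2 = ((a : ℤ) + b) * ((b : ℤ) + 1 - a) := by
  have hsplit : Finset.Icc 1 b = Finset.Icc 1 (a - 1) ∪ Finset.Icc a b := by
    ext x; simp only [Finset.mem_union, Finset.mem_Icc]; omega
  have hdisj : Disjoint (Finset.Icc 1 (a - 1)) (Finset.Icc a b) := by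
    rw [Finset.disjoint_left]
    intro x hx hx'
    simp only [Finset.mem_Icc] at hx hx'
    omega
  have h1 := sumIcc1 b
  have h2 := sumIcc1 (a - 1)
  have h3 : (∑ n ∈ Finset.Icc 1 b, (n : ℤ)) =
      (∑ n ∈ Finset.Icc 1 (a - 1), (n : ℤ)) + ∑ n ∈ Finset.Icc a b, (n : ℤ) := by
    rw [hsplit, Finset.sum_union hdisj]
  have hc : ((a - 1 : ℕ) : ℤ) = (a : ℤ) - 1 := by omega
  rw [hc] at h2
  nlinarith [h1, h2, h3]

theorem weight_bound_unramified_case_b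
    (g γ : ℕ) (hγ : 1 ≤ γ) (hg : 8 * γ ≤ g)
    (H : Set ℕ)
    (h0 : 0 ∈ H) (hadd : ∀ a ∈ H, ∀ b ∈ H, a + b ∈ H)
    (hfin : {n : ℕ | n ∉ H}.Finite) (hgenus : {n : ℕ | n ∉ H}.ncard = g)
    (ℓ : Fin g → ℕ) (hmono : StrictMono ℓ)
    (hrange : Set.range ℓ = {n : ℕ | n ∉ H})
    (hmin : ∀ h ∈ H, h ≠ 0 → g - 2 * γ + 1 ≤ h)
    (hicc : ∀ n : ℕ, g - 2 * γ + 1 ≤ n → n ≤ g → n ∈ H) :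
    (∑ i, ((ℓ i : ℤ) - ((i : ℕ) + 1)) ≤ 2 * γ * g - 2 * γ * (4 * γ - 1)) ∧
    ((∑ n ∈ Finset.Icc 1 (g - 2 * γ) ∪
        Finset.Icc (2 * g - 6 * γ + 2) (2 * g - 4 * γ + 1), (n : ℤ)) -
      ∑ i ∈ Finset.Icc 1 g, (i : ℤ) = 2 * γ * g - 2 * γ * (4 * γ - 1)) := by
  have := Classical.decPred (· ∈ H)
  -- A : small numbers are gaps
  have hA : ∀ n : ℕ, 1 ≤ n → n ≤ g - 2 * γ → n ∉ H := by
    intro n h1 h2 hn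
    have := hmin n hn (by omega)
    omega
  -- B : large numbers up to 2g are in H
  have hB : ∀ n : ℕ, 2 * g - 4 * γ + 2 ≤ n → n ≤ 2 * g → n ∈ H := by
    intro n h1 h2
    set a := max (g - 2 * γ + 1) (n - g) with ha
    have haH : a ∈ H := hicc a (le_max_left _ _) (by omega)
    have hbH : n - a ∈ H := hicc (n - a) (by omega) (by omega)
    have hsum := hadd a haH (n - a) hbH
    have heq : a + (n - a) = n := by omega
    rwa [heq] at hsum
  -- the gap finset
  set Gs := hfin.toFinset with hGsdef
  have hGsmem : ∀ x : ℕ, x ∈ Gs ↔ x ∉ H := by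
    intro x; rw [hGsdef, Set.Finite.mem_toFinset]; rfl
  have hGscard : Gs.card = g := by
    rw [hGsdef, ← Set.ncard_eq_toFinset_card _ hfin]
    exact hgenus
  have hGsne : Gs.Nonempty := by
    rw [← Finset.card_pos, hGscard]; omega
  set F := Gs.max' hGsne with hF
  have hFgap : F ∉ H := (hGsmem F).1 (Gs.max'_mem hGsne)
  have hle_F : ∀ x : ℕ, x ∉ H → x ≤ F := by
    intro x hx
    exact Gs.le_max' x ((hGsmem x).2 hx)
  have hF1 : 1 ≤ F := by
    rcases Nat.eq_zero_or_pos F with h | h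
    · exact absurd (h ▸ h0) hFgap
    · exact h
  -- C : F ≤ 2g - 1
  have hC : F ≤ 2 * g - 1 := by
    by_contra hcon
    push_neg at hcon
    set T := (Finset.Icc 1 (F - 1)).filter (fun a => a ∈ H) with hT
    set T' := (Finset.Icc 1 (F - 1)).filter (fun a => ¬ a ∈ H) with hT'
    have hTT' : T.card + T'.card = F - 1 := by
      rw [hT, hT', Finset.card_filter_add_card_filter_not, Nat.card_Icc]
      omega
    have hT'sub : T' ⊆ Gs.erase F := by
      intro x hx
      rw [hT', Finset.mem_filter, Finset.mem_Icc] at hx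
      rw [Finset.mem_erase, hGsmem]
      exact ⟨by omega, hx.2⟩
    have hT'card : T'.card ≤ g - 1 := by
      have := Finset.card_le_card hT'sub
      rwa [Finset.card_erase_of_mem (Gs.max'_mem hGsne), hGscard] at this
    have hTcard : T.card ≤ g - 1 := by
      have : T.card ≤ (Gs.erase F).card := by
        apply Finset.card_le_card_of_injOn (fun a => F - a)
        · intro a haT
          rw [hT, Finset.mem_coe, Finset.mem_filter, Finset.mem_Icc] at haT
          obtain ⟨⟨ha1, ha2⟩, haH⟩ := haT
          rw [Finset.mem_coe, Finset.mem_erase, hGsmem]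
          beta_reduce
          constructor
          · omega
          · intro hcontra
            have := hadd a haH (F - a) hcontra
            have heq : a + (F - a) = F := by omega
            rw [heq] at this
            exact hFgap this
        · intro x hx y hy hxy
          simp only [hT, Finset.coe_filter, Set.mem_setOf_eq, Finset.mem_Icc] at hx hy
          simp only [] at hxy
          omega
      rwa [Finset.card_erase_of_mem (Gs.max'_mem hGsne), hGscard] at this
    omega
  -- D : all gaps are ≤ 2g - 4γ + 1
  have hD : ∀ n : ℕ, n ∉ H → n ≤ 2 * g - 4 * γ + 1 := by
    intro n hn
    have hnF := hle_F n hn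
    by_contra hcon
    push_neg at hcon
    exact hn (hB n (by omega) (by omega))
  -- strict monotonicity step lemma
  have hmonoadd : ∀ k : ℕ, ∀ i : Fin g, ∀ h : (i : ℕ) + k < g,
      ℓ i + k ≤ ℓ ⟨(i : ℕ) + k, h⟩ := by
    intro k
    induction k with
    | zero =>
      intro i h
      have he : (⟨(i : ℕ) + 0, h⟩ : Fin g) = i := by ext; simp
      rw [he]
      omega
    | succ m ih =>
      intro i h
      have h' : (i : ℕ) + m < g := by omega
      have h1 := ih i h'
      have h2 : ℓ ⟨(i : ℕ) + m, h'⟩ < ℓ ⟨(i : ℕ) + (m + 1), h⟩ := by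
        apply hmono
        simp [Fin.lt_def]
      omega
  -- upper bound for all indices : ℓ i + (g - 1 - i) ≤ 2g - 4γ + 1
  have hupper : ∀ i : Fin g, ℓ i + (g - 1 - (i : ℕ)) ≤ 2 * g - 4 * γ + 1 := by
    intro i
    have hi : (i : ℕ) < g := i.isLt
    have h1 : (i : ℕ) + (g - 1 - (i : ℕ)) < g := by omega
    have h2 := hmonoadd (g - 1 - (i : ℕ)) i h1
    have h3 : ℓ ⟨(i : ℕ) + (g - 1 - (i : ℕ)), h1⟩ ∉ H := by
      have : ℓ ⟨(i : ℕ) + (g - 1 - (i : ℕ)), h1⟩ ∈ Set.range ℓ := Set.mem_range_self _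
      rw [hrange] at this
      exact this
    have := hD _ h3
    omega
  -- for small indices, ℓ i ≤ i + 1
  have hsmall : ∀ k : ℕ, ∀ h : k < g, k < g - 2 * γ → ℓ ⟨k, h⟩ ≤ k + 1 := by
    intro k
    induction k with
    | zero =>
      intro h hk
      have h1 : (1 : ℕ) ∉ H := hA 1 le_rfl (by omega)
      have : (1 : ℕ) ∈ Set.range ℓ := by rw [hrange]; exact h1
      obtain ⟨j, hj⟩ := this
      have hle : (⟨0, h⟩ : Fin g) ≤ j := by rw [Fin.le_def]; exact Nat.zero_le _
      have : ℓ ⟨0, h⟩ ≤ ℓ j := hmono.monotone hle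
      omega
    | succ m ih =>
      intro h hk
      have h' : m < g := by omega
      have hm := ih h' (by omega)
      have h1 : (m + 2 : ℕ) ∉ H := hA (m + 2) (by omega) (by omega)
      have : (m + 2 : ℕ) ∈ Set.range ℓ := by rw [hrange]; exact h1
      obtain ⟨j, hj⟩ := this
      have hjge : (⟨m + 1, h⟩ : Fin g) ≤ j := by
        by_contra hcon
        push_neg at hcon
        have hjm : j ≤ (⟨m, h'⟩ : Fin g) := by
          rw [Fin.le_def]; rw [Fin.lt_def] at hcon; simpa using Nat.lt_succ_iff.mp hcon
        have : ℓ j ≤ ℓ ⟨m, h'⟩ := hmono.monotone hjm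
        omega
      have : ℓ ⟨m + 1, h⟩ ≤ ℓ j := hmono.monotone hjge
      omega
  -- lower bound ℓ i ≥ i + 1 (not strictly needed but cheap)
  -- Part 1
  have part1 : ∑ i, ((ℓ i : ℤ) - ((i : ℕ) + 1)) ≤ 2 * γ * g - 2 * γ * (4 * γ - 1) := by
    set f : ℕ → ℤ := fun k => if h : k < g then (ℓ ⟨k, h⟩ : ℤ) - (k + 1) else 0 with hf
    have hsum : ∑ i, ((ℓ i : ℤ) - ((i : ℕ) + 1)) = ∑ k ∈ Finset.range g, f k := by
      rw [← Fin.sum_univ_eq_sum_range]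
      apply Finset.sum_congr rfl
      intro i _
      rw [hf]
      simp only [i.isLt, dif_pos]
    rw [hsum]
    have hsplit : Finset.range g = Finset.Ico 0 (g - 2 * γ) ∪ Finset.Ico (g - 2 * γ) g := by
      ext x; simp only [Finset.mem_range, Finset.mem_union, Finset.mem_Ico]; omega
    have hdisj : Disjoint (Finset.Ico 0 (g - 2 * γ)) (Finset.Ico (g - 2 * γ) g) := by
      rw [Finset.disjoint_left]
      intro x hx hx'
      simp only [Finset.mem_Ico] at hx hx'
      omega
    rw [hsplit, Finset.sum_union hdisj]
    have hfirst : ∑ k ∈ Finset.Ico 0 (g - 2 * γ), f k ≤ 0 := by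
      apply Finset.sum_nonpos
      intro k hk
      rw [Finset.mem_Ico] at hk
      have hkg : k < g := by omega
      have := hsmall k hkg hk.2
      rw [hf]
      simp only [hkg, dif_pos]
      omega
    have hsecond : ∑ k ∈ Finset.Ico (g - 2 * γ) g, f k ≤
        (2 * γ : ℤ) * ((g : ℤ) - 4 * γ + 1) := by
      have hcard : (Finset.Ico (g - 2 * γ) g).card = 2 * γ := by
        rw [Nat.card_Ico]; omega
      calc ∑ k ∈ Finset.Ico (g - 2 * γ) g, f k
          ≤ ∑ _k ∈ Finset.Ico (g - 2 * γ) g, ((g : ℤ) - 4 * γ + 1) := by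
            apply Finset.sum_le_sum
            intro k hk
            rw [Finset.mem_Ico] at hk
            have hkg : k < g := hk.2
            have := hupper ⟨k, hkg⟩
            rw [hf]
            simp only [hkg, dif_pos]
            simp only at this
            omega

        _ = (2 * γ : ℤ) * ((g : ℤ) - 4 * γ + 1) := by
            rw [Finset.sum_const, hcard]
            push_cast
            ring
    have : (2 * γ : ℤ) * ((g : ℤ) - 4 * γ + 1) = 2 * γ * g - 2 * γ * (4 * γ - 1) := by ring
    omega
  refine ⟨part1, ?_⟩
  -- Part 2 : the explicit computation
  have hdisj2 : Disjoint (Finset.Icc 1 (g - 2 * γ))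
      (Finset.Icc (2 * g - 6 * γ + 2) (2 * g - 4 * γ + 1)) := by
    rw [Finset.disjoint_left]
    intro x hx hx'
    simp only [Finset.mem_Icc] at hx hx'
    omega
  rw [Finset.sum_union hdisj2]
  have h1 := sumIcc 1 (g - 2 * γ) le_rfl (by omega)
  have h2 := sumIcc (2 * g - 6 * γ + 2) (2 * g - 4 * γ + 1) (by omega) (by omega)
  have h3 := sumIcc 1 g le_rfl (by omega)
  have hc1 : ((g - 2 * γ : ℕ) : ℤ) = (g : ℤ) - 2 * γ := by omega
  have hc2 : ((2 * g - 6 * γ + 2 : ℕ) : ℤ) = 2 * (g : ℤ) - 6 * γ + 2 := by omega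
  have hc3 : ((2 * g - 4 * γ + 1 : ℕ) : ℤ) = 2 * (g : ℤ) - 4 * γ + 1 := by omega
  rw [hc1] at h1
  rw [hc2, hc3] at h2
  linarith [h1, h2, h3]
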